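/- There is a label-preserving bijection between the saturated chains starting at 0̂ of the pointed partition poset Π_n^• (labeled by λ_•, or equivalently λ_{•2}) and the saturated chains starting at 0̂ of the weighted partition poset Π_n^w (labeled by λ_w): corresponding chains have identical words of labels in the common underlying label set {(a,b)^u : 1 ≤ a < b ≤ n, u ∈ {0,1}}. -/

import Mathlib

open Finset

open scoped BigOperators Classical

/-! ## Generic machinery for edge labelings of posets presented by cover relations -/

section Chains

variable {α : Type*} {L : Type*}

/-- The word of labels read along a list of poset elements. -/
def wordOf (lab : α → α → L) : List α → List L
  | x :: y :: rest => lab x y :: wordOf lab (y :: rest)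
  | _ => []

/-- `c` is a saturated chain from `x` to `y` with respect to the cover relation `cov`;
in a graded poset these are exactly the maximal chains of the interval `[x, y]`. -/
def IsSatChain (cov : α → α → Prop) (x y : α) (c : List α) : Prop :=
  c.Chain' cov ∧ c.head? = some x ∧ c.getLast? = some y

/-- A word of labels is increasing if consecutive labels strictly increase. -/
def IncWord (lt : L → L → Prop) (w : List L) : Prop := w.Chain' lt

/-- A word of labels is ascent-free if no consecutive pair of labels strictly increases. -/
def AscFree (lt : L → L → Prop) (w : List L) : Prop := w.Chain' fun a b => ¬ lt a b

/-- The partial order generated by a cover relation. -/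
def leOf (cov : α → α → Prop) : α → α → Prop := Relation.ReflTransGen cov

/-- The strict order generated by a cover relation. -/
def ltOf (cov : α → α → Prop) (a b : α) : Prop := leOf cov a b ∧ a ≠ b

/-- An ER-labeling: every closed interval has a unique increasing maximal chain. -/
def IsERLabeling (cov : α → α → Prop) (lab : α → α → L) (lt : L → L → Prop) : Prop :=
  ∀ x y, leOf cov x y → ∃! c, IsSatChain cov x y c ∧ IncWord lt (wordOf lab c)

/-- The rank two switching property: in every rank-two interval whose increasing chain
has word of labels `ab`, there is a unique chain with word of labels `ba`. -/
def RankTwoSwitch (cov : α → α → Prop) (lab : α → α → L) (lt : L → L → Prop) : Prop :=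
  ∀ x y c a b, IsSatChain cov x y c → IncWord lt (wordOf lab c) → wordOf lab c = [a, b] →
    ∃! c', IsSatChain cov x y c' ∧ wordOf lab c' = [b, a]

/-- In every interval, distinct ascent-free maximal chains have distinct label words. -/
def AscFreeInj (cov : α → α → Prop) (lab : α → α → L) (lt : L → L → Prop) : Prop :=
  ∀ x y c c', IsSatChain cov x y c → IsSatChain cov x y c' →
    AscFree lt (wordOf lab c) → AscFree lt (wordOf lab c') →
    wordOf lab c = wordOf lab c' → c = c'

/-- An EW-labeling. -/
def IsEWLabeling (cov : α → α → Prop) (lab : α → α → L) (lt : L → L → Prop) : Prop :=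
  IsERLabeling cov lab lt ∧ RankTwoSwitch cov lab lt ∧ AscFreeInj cov lab lt

/-- An EL-labeling: every closed interval has a unique increasing maximal chain,
which lexicographically precedes every other maximal chain of the interval. -/
def IsELLabeling (cov : α → α → Prop) (lab : α → α → L) (lt : L → L → Prop) : Prop :=
  ∀ x y, leOf cov x y →
    ∃ c, (IsSatChain cov x y c ∧ IncWord lt (wordOf lab c)) ∧
      ∀ c', IsSatChain cov x y c' → c' ≠ c →
        ¬ IncWord lt (wordOf lab c') ∧ List.Lex lt (wordOf lab c) (wordOf lab c')

end Chains

/-! ## Möbius functions and Whitney numbers -/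

section Whitney

variable {α : Type*} {β : Type*}

/-- Auxiliary Möbius function computed with fuel; for an element of rank `k` of a
graded poset, fuel `k` computes the one-variable Möbius function `μ(0̂, ·)`. -/
noncomputable def muAux (ltr : α → α → Prop) (bot : α) : ℕ → α → ℤ
  | 0, x => if x = bot then 1 else 0
  | k + 1, x => if x = bot then 1 else - ∑ᶠ (y : α) (_ : ltr y x), muAux ltr bot k y

/-- The one-variable Möbius function `μ(0̂, x)` of a graded poset presented by its
cover relation `cov`, minimum `bot` and rank function `rk`. -/
noncomputable def muBot (cov : α → α → Prop) (bot : α) (rk : α → ℕ) (x : α) : ℤ :=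
  muAux (ltOf cov) bot (rk x) x

/-- The `k`-th Whitney number of the first kind. -/
noncomputable def whitney1 (cov : α → α → Prop) (bot : α) (rk : α → ℕ) (k : ℕ) : ℤ :=
  ∑ᶠ (x : α) (_ : rk x = k), muBot cov bot rk x

/-- The `k`-th Whitney number of the second kind. -/
noncomputable def whitney2 (rk : α → ℕ) (k : ℕ) : ℕ :=
  Nat.card {x : α // rk x = k}

/-- Two graded posets are Whitney duals if their Whitney numbers of the first and second
kind are swapped (up to sign). -/
def IsWhitneyDual (covP : α → α → Prop) (botP : α) (rkP : α → ℕ)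
    (covQ : β → β → Prop) (botQ : β) (rkQ : β → ℕ) : Prop :=
  ∀ k, (whitney1 covP botP rkP k).natAbs = whitney2 rkQ k ∧
       (whitney1 covQ botQ rkQ k).natAbs = whitney2 rkP k

/-- Two graded posets are Whitney twins if they have the same Whitney numbers of the first
and of the second kind. -/
def IsWhitneyTwin (covP : α → α → Prop) (botP : α) (rkP : α → ℕ)
    (covQ : β → β → Prop) (botQ : β) (rkQ : β → ℕ) : Prop :=
  ∀ k, whitney1 covP botP rkP k = whitney1 covQ botQ rkQ k ∧ whitney2 rkP k = whitney2 rkQ k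

/-- `(cov, bot, rk)` presents a graded poset with minimum `bot`. -/
def IsGradedPoset (cov : α → α → Prop) (bot : α) (rk : α → ℕ) : Prop :=
  (∀ x, leOf cov bot x) ∧ rk bot = 0 ∧ ∀ x y, cov x y → rk y = rk x + 1

/-- A graded poset has a Whitney dual. -/
def HasWhitneyDual {γ : Type} (cov : γ → γ → Prop) (bot : γ) (rk : γ → ℕ) : Prop :=
  ∃ (β : Type) (_ : Finite β) (covQ : β → β → Prop) (botQ : β) (rkQ : β → ℕ),
    IsGradedPoset covQ botQ rkQ ∧ IsWhitneyDual cov bot rk covQ botQ rkQ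

/-- Isomorphism of the posets generated by two cover relations. -/
def CovPosetIso (covP : α → α → Prop) (covQ : β → β → Prop) : Prop :=
  ∃ e : α ≃ β, ∀ x y, leOf covP x y ↔ leOf covQ (e x) (e y)

end Whitney

/-! ## The label posets `Λₙʷ` and `Λₙ•` (strict order relations)

Labels are triples `(a, b, u)` with `a < b` in `[n]` and `u ∈ {0,1}` (encoded as `Bool`). -/

/-- The strict order of `Λₙʷ = Γ₁ ⊕ ⋯ ⊕ Γ_{n-1}` where `Γ_a` carries the product order
`(a,b)ᵘ ≤ (a,c)ᵛ ↔ b ≤ c ∧ u ≤ v`. -/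
def ltLw (x y : ℕ × ℕ × Bool) : Prop :=
  x.1 < y.1 ∨ (x.1 = y.1 ∧ x.2.1 ≤ y.2.1 ∧ x.2.2 ≤ y.2.2 ∧ x.2 ≠ y.2)

/-- The strict order of `Λₙ• = A₁ ⊕ C₁ ⊕ ⋯ ⊕ A_{n-1} ⊕ C_{n-1}` where `A_a` is the
antichain of the `(a,b)⁰` and `C_a` is the chain of the `(a,b)¹` ordered by `b`. -/
def ltLp (x y : ℕ × ℕ × Bool) : Prop :=
  x.1 < y.1 ∨ (x.1 = y.1 ∧
    ((x.2.2 = false ∧ y.2.2 = true) ∨ (x.2.2 = true ∧ y.2.2 = true ∧ x.2.1 < y.2.1)))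

/-! ## Pointed and weighted partition posets -/

/-- The minimum of a finite set of naturals (`0` for the empty set). -/
def minB (B : Finset ℕ) : ℕ := WithTop.untopD 0 B.min

/-- Pointed partitions of the ground set `A`: partitions of `A` into blocks, each block
carrying a distinguished (pointed) element.  A pointed block is a pair `(B, p)` with `p ∈ B`. -/
abbrev PPart (A : Finset ℕ) : Type :=
  {π : Finset (Finset ℕ × ℕ) //
    (∀ b ∈ π, b.2 ∈ b.1) ∧
    (∀ b ∈ π, ∀ b' ∈ π, b ≠ b' → Disjoint b.1 b'.1) ∧
    π.biUnion Prod.fst = A}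

/-- The cover relation of the pointed partition poset: merge two pointed blocks, the merged
block being pointed at the pointed element of one of the two. -/
def covPP {A : Finset ℕ} (π π' : PPart A) : Prop :=
  ∃ b1 ∈ π.1, ∃ b2 ∈ π.1, minB b1.1 < minB b2.1 ∧
    ∃ p : ℕ, (p = b1.2 ∨ p = b2.2) ∧
      π'.1 = insert (b1.1 ∪ b2.1, p) ((π.1.erase b1).erase b2)

/-- The labeling `λ•` (as a bare label map): the cover `u`-merging blocks `A, B` with
`min A < min B` gets the label `(min A, min B, u)`, where `u = 1` exactly when the merged
block is pointed at the pointed element of `A`. -/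
noncomputable def labPP {A : Finset ℕ} (π π' : PPart A) : ℕ × ℕ × Bool :=
  let olds := π.1 \ π'.1
  let mins := olds.image (fun b => minB b.1)
  (WithTop.untopD 0 mins.min, WithBot.unbotD 0 mins.max,
    if ∃ b ∈ olds, minB b.1 = WithTop.untopD 0 mins.min ∧ ∃ d ∈ π'.1 \ π.1, d.2 = b.2
      then true else false)

/-- The minimum of the pointed partition poset: all blocks are pointed singletons. -/
def botPP (A : Finset ℕ) : PPart A :=
  ⟨A.image fun i => ({i}, i), by
    refine ⟨?_, ?_, ?_⟩
    · intro b hb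
      obtain ⟨i, -, rfl⟩ := Finset.mem_image.1 hb
      exact Finset.mem_singleton_self i
    · intro b hb b' hb' hne
      obtain ⟨i, -, rfl⟩ := Finset.mem_image.1 hb
      obtain ⟨j, -, rfl⟩ := Finset.mem_image.1 hb'
      have hij : i ≠ j := fun h => hne (by rw [h])
      simp [Finset.disjoint_left, hij]
    · ext x
      simp⟩

/-- The rank function of the pointed partition poset. -/
def rkPP {A : Finset ℕ} (π : PPart A) : ℕ := A.card - π.1.card

/-- Weighted partitions of the ground set `A`: partitions of `A` into blocks, each block `B`
carrying a weight `v` with `0 ≤ v ≤ |B| - 1`. -/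
abbrev WPart (A : Finset ℕ) : Type :=
  {π : Finset (Finset ℕ × ℕ) //
    (∀ b ∈ π, b.2 < b.1.card) ∧
    (∀ b ∈ π, ∀ b' ∈ π, b ≠ b' → Disjoint b.1 b'.1) ∧
    π.biUnion Prod.fst = A}

/-- The cover relation of the weighted partition poset: merge blocks `A^v, B^w` into
`(A ∪ B)^(v+w+u)` for some `u ∈ {0,1}`. -/
def covWP {A : Finset ℕ} (π π' : WPart A) : Prop :=
  ∃ b1 ∈ π.1, ∃ b2 ∈ π.1, minB b1.1 < minB b2.1 ∧ ∃ u : Bool,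
    π'.1 = insert (b1.1 ∪ b2.1, b1.2 + b2.2 + (if u then 1 else 0)) ((π.1.erase b1).erase b2)

/-- The labeling `λ_w` (as a bare label map): the cover merging `A^v, B^w` with
`min A < min B` into `(A ∪ B)^(v+w+u)` gets the label `(min A, min B, u)`. -/
noncomputable def labWP {A : Finset ℕ} (π π' : WPart A) : ℕ × ℕ × Bool :=
  let olds := π.1 \ π'.1
  let mins := olds.image (fun b => minB b.1)
  (WithTop.untopD 0 mins.min, WithBot.unbotD 0 mins.max,
    if (π'.1 \ π.1).sum Prod.snd = olds.sum Prod.snd + 1 then true else false)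

/-- The minimum of the weighted partition poset: all blocks singletons of weight `0`. -/
def botWP (A : Finset ℕ) : WPart A :=
  ⟨A.image fun i => ({i}, 0), by
    refine ⟨?_, ?_, ?_⟩
    · intro b hb
      obtain ⟨i, -, rfl⟩ := Finset.mem_image.1 hb
      simp
    · intro b hb b' hb' hne
      obtain ⟨i, -, rfl⟩ := Finset.mem_image.1 hb
      obtain ⟨j, -, rfl⟩ := Finset.mem_image.1 hb'
      have hij : i ≠ j := fun h => hne (by rw [h])
      simp [Finset.disjoint_left, hij]
    · ext x
      simp⟩

/-- The rank function of the weighted partition poset. -/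
def rkWP {A : Finset ℕ} (π : WPart A) : ℕ := A.card - π.1.card
/-! ## Bicolored binary trees and Lyndon forests -/

/-- Planar binary trees with `ℕ`-labeled leaves and `Bool`-colored internal vertices
(`false` = color 0, `true` = color 1). -/
inductive BT : Type
  | leaf : ℕ → BT
  | node : Bool → BT → BT → BT
deriving DecidableEq

namespace BT

/-- The valency: the minimum leaf label of a tree. -/
def nu : BT → ℕ
  | leaf a => a
  | node _ l r => min l.nu r.nu

/-- The set of leaf labels of a tree. -/
def leaves : BT → Finset ℕ
  | leaf a => {a}
  | node _ l r => l.leaves ∪ r.leaves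

/-- The number of internal vertices of a tree. -/
def internals : BT → ℕ
  | leaf _ => 0
  | node _ l r => l.internals + r.internals + 1

/-- A tree is normalized if its leaf labels are distinct and every internal vertex has the
same valency as its left child. -/
def normalized : BT → Prop
  | leaf _ => True
  | node _ l r => l.normalized ∧ r.normalized ∧ Disjoint l.leaves r.leaves ∧ l.nu < r.nu

/-- The pointed Lyndon condition: at every internal vertex `v` with internal left child,
`color (L v) ≥ color v`, and if `color (L v) = color v = 1` then `v` is a Lyndon vertex,
i.e. `ν (R (L v)) > ν (R v)`. -/
def pLyn : BT → Prop
  | leaf _ => True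
  | node c l r => l.pLyn ∧ r.pLyn ∧
      (match l with
       | leaf _ => True
       | node c' _ r' => c ≤ c' ∧ ((c' = c ∧ c = true) → r.nu < r'.nu))

/-- The bicolored Lyndon condition: every internal vertex with internal left child is
Lyndon (`ν (R (L v)) > ν (R v)`) or satisfies `color (L v) > color v`. -/
def wLyn : BT → Prop
  | leaf _ => True
  | node c l r => l.wLyn ∧ r.wLyn ∧
      (match l with
       | leaf _ => True
       | node c' _ r' => r.nu < r'.nu ∨ c < c')

/-- The pointed element of a bicolored tree: a `1`-colored vertex keeps the point of its
left subtree and a `0`-colored vertex keeps the point of its right subtree. -/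
def ppt : BT → ℕ
  | leaf a => a
  | node c l r => if c then l.ppt else r.ppt

end BT

/-- `u`-merging of two pointed Lyndon trees: create a new root of color `u` with the two
trees as subtrees, then repeatedly slide the new vertex together with its right subtree
past its left child until the pointed Lyndon condition holds at the new vertex. -/
def mergeP (u : Bool) : BT → BT → BT
  | BT.leaf a, t2 => BT.node u (BT.leaf a) t2
  | BT.node c a b, t2 =>
      if u ≤ c ∧ ((c = true ∧ u = true) → t2.nu < b.nu)
      then BT.node u (BT.node c a b) t2
      else BT.node c (mergeP u a t2) b

/-- `u`-merging of two bicolored Lyndon trees: create a new root of color `u` with the two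
trees as subtrees, then repeatedly slide the new vertex together with its right subtree
past its left child until the bicolored Lyndon condition holds at the new vertex. -/
def mergeW (u : Bool) : BT → BT → BT
  | BT.leaf a, t2 => BT.node u (BT.leaf a) t2
  | BT.node c a b, t2 =>
      if t2.nu < b.nu ∨ u < c
      then BT.node u (BT.node c a b) t2
      else BT.node c (mergeW u a t2) b

/-- A valid forest on the ground set `[n]`, each tree normalized and satisfying `P`, the
trees having pairwise disjoint leaf sets which together cover `[n] = {1, …, n}`. -/
def ForestValid (n : ℕ) (P : BT → Prop) (F : Finset BT) : Prop :=
  (∀ t ∈ F, t.normalized ∧ P t) ∧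
  (∀ t ∈ F, ∀ t' ∈ F, t ≠ t' → Disjoint t.leaves t'.leaves) ∧
  F.biUnion BT.leaves = Finset.Icc 1 n

/-- The set of pointed Lyndon forests on `[n]`. -/
abbrev FLynP (n : ℕ) : Type := {F : Finset BT // ForestValid n BT.pLyn F}

/-- The set of bicolored Lyndon forests on `[n]`. -/
abbrev FLynW (n : ℕ) : Type := {F : Finset BT // ForestValid n BT.wLyn F}

/-- The cover relation on forests: `u`-merge two of the trees (the one with smaller minimum
leaf label going to the left). -/
def covForest (merge : Bool → BT → BT → BT) (F F' : Finset BT) : Prop :=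
  ∃ t1 ∈ F, ∃ t2 ∈ F, t1.nu < t2.nu ∧ ∃ u : Bool,
    F' = insert (merge u t1 t2) ((F.erase t1).erase t2)

/-- The cover relation of the poset of pointed Lyndon forests `FLyn_n^•`. -/
def covFP {n : ℕ} (F F' : FLynP n) : Prop := covForest mergeP F.1 F'.1

/-- The cover relation of the poset of bicolored Lyndon forests `FLyn_n^w`. -/
def covFW {n : ℕ} (F F' : FLynW n) : Prop := covForest mergeW F.1 F'.1

/-- The forest of `n` isolated leaves. -/
def botForest (n : ℕ) : Finset BT := (Finset.Icc 1 n).image BT.leaf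

theorem botForest_valid (n : ℕ) (P : BT → Prop) (hP : ∀ a, P (BT.leaf a)) :
    ForestValid n P (botForest n) := by
  refine ⟨?_, ?_, ?_⟩
  · intro t ht
    obtain ⟨i, -, rfl⟩ := Finset.mem_image.1 ht
    exact ⟨trivial, hP i⟩
  · intro t ht t' ht' hne
    obtain ⟨i, -, rfl⟩ := Finset.mem_image.1 ht
    obtain ⟨j, -, rfl⟩ := Finset.mem_image.1 ht'
    have hij : i ≠ j := fun h => hne (by rw [h])
    simp only [BT.leaves]
    simp [Finset.disjoint_left, hij]
  · ext x
    simp [botForest, BT.leaves]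

/-- The minimum of the poset of pointed Lyndon forests. -/
def botFP (n : ℕ) : FLynP n := ⟨botForest n, botForest_valid n _ fun _ => trivial⟩

/-- The minimum of the poset of bicolored Lyndon forests. -/
def botFW (n : ℕ) : FLynW n := ⟨botForest n, botForest_valid n _ fun _ => trivial⟩

/-- The rank of a forest: its total number of internal vertices. -/
def rkForest (F : Finset BT) : ℕ := F.sum BT.internals

/-- The rank function of `FLyn_n^•`. -/
def rkFP {n : ℕ} (F : FLynP n) : ℕ := rkForest F.1

/-- The rank function of `FLyn_n^w`. -/
def rkFW {n : ℕ} (F : FLynW n) : ℕ := rkForest F.1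

/-! ## The Whitney dual construction `R_λ(P)` -/

section RPoset

variable {α : Type*} {L : Type*}

/-- Swap the leftmost ascent of a word of labels. -/
noncomputable def swapFirstAscent (lt : L → L → Prop) : List L → List L
  | a :: b :: rest => if lt a b then b :: a :: rest else a :: swapFirstAscent lt (b :: rest)
  | w => w

/-- Sort a word of labels by repeatedly swapping its leftmost ascent until it is
ascent-free. -/
noncomputable def sortWord (lt : L → L → Prop) (w : List L) : List L :=
  (swapFirstAscent lt)^[w.length * w.length] w

/-- The underlying set of the Whitney dual `R_λ(P)`: pairs `(x, w)` where `w` is the label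
word of an ascent-free saturated chain from `0̂` to `x`. -/
abbrev RPoset (cov : α → α → Prop) (lab : α → α → L) (lt : L → L → Prop) (bot : α) : Type _ :=
  {q : α × List L //
    ∃ c, IsSatChain cov bot q.1 c ∧ AscFree lt (wordOf lab c) ∧ wordOf lab c = q.2}

/-- The cover relation of `R_λ(P)`: `(x, w) ⋖ (y, u)` iff `x ⋖ y` and `u` is obtained by
sorting the label of `x ⋖ y` into `w`. -/
def covR (cov : α → α → Prop) (lab : α → α → L) (lt : L → L → Prop) (bot : α)
    (p q : RPoset cov lab lt bot) : Prop :=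
  cov p.1.1 q.1.1 ∧ q.1.2 = sortWord lt (p.1.2 ++ [lab p.1.1 q.1.1])

end RPoset

/-! ## Reiner's poset of rooted spanning forests -/

/-- A rooted spanning forest on `[n]`, encoded by its parent function: `f i` is the parent
of the vertex `i` (`f i = i` for roots), vertices outside `[n]` being fixed, and every
vertex reaching a root after finitely many steps (acyclicity). -/
def SFvalid (n : ℕ) (f : ℕ → ℕ) : Prop :=
  (∀ i ∈ Finset.Icc 1 n, f i ∈ Finset.Icc 1 n) ∧
  (∀ i, i ∉ Finset.Icc 1 n → f i = i) ∧
  (∀ i, ∃ k, f^[k + 1] i = f^[k] i)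

/-- Reiner's poset `SF_n` of rooted spanning forests of the complete graph on `[n]`. -/
abbrev SF (n : ℕ) : Type := {f : ℕ → ℕ // SFvalid n f}

/-- The cover relation of `SF_n`: add an edge between the roots of two trees, one of the
two roots becoming the root of the merged tree. -/
def covSF {n : ℕ} (f g : SF n) : Prop :=
  ∃ r1 ∈ Finset.Icc 1 n, ∃ r2 ∈ Finset.Icc 1 n, r1 ≠ r2 ∧
    f.1 r1 = r1 ∧ f.1 r2 = r2 ∧
    (g.1 = Function.update f.1 r1 r2 ∨ g.1 = Function.update f.1 r2 r1)

/-- The rank of a rooted spanning forest: its number of edges. -/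
def rkSF {n : ℕ} (f : SF n) : ℕ := ((Finset.Icc 1 n).filter fun i => f.1 i ≠ i).card
/-! ## Further constructions used in particular statements -/

/-- The map `Φ` on underlying finsets: a pointed block `(B, q)` of a pointed partition
above `α` is sent to the set of minima of the `α`-blocks contained in `B`, pointed at the
minimum of the `α`-block containing `q`. -/
noncomputable def PhiMap (af : Finset (Finset ℕ × ℕ)) (pf : Finset (Finset ℕ × ℕ)) :
    Finset (Finset ℕ × ℕ) :=
  pf.image fun b =>
    ((af.filter fun c => c.1 ⊆ b.1).image fun c => minB c.1,
     WithTop.untopD 0 ((af.filter fun c => b.2 ∈ c.1).image fun c => minB c.1).min)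

/-- The expected word of labels of the unique increasing maximal chain of the interval
`[0̂, [n]^p]` of the pointed partition poset:
`(1,2)¹ ⋯ (1,n)¹` if `p = 1`, and `(1,p)⁰ (1,2)¹ ⋯ (1,p-1)¹ (1,p+1)¹ ⋯ (1,n)¹` otherwise. -/
def expectedWordP (n p : ℕ) : List (ℕ × ℕ × Bool) :=
  let base := (List.range (n - 1)).map fun i => ((1 : ℕ), i + 2, true)
  if p = 1 then base else ((1 : ℕ), p, false) :: base.erase (1, p, true)

/-- Merge two words of labels, each with non-increasing first components, into a single
word with non-increasing first components. -/
def mergeByNu : List (ℕ × ℕ × Bool) → List (ℕ × ℕ × Bool) → List (ℕ × ℕ × Bool)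
  | [], ys => ys
  | xs, [] => xs
  | x :: xs, y :: ys =>
      if y.1 ≤ x.1 then x :: mergeByNu xs (y :: ys) else y :: mergeByNu (x :: xs) ys
termination_by xs ys => xs.length + ys.length

/-- The word of labels of a tree read along the reverse-minimal linear extension of its
internal vertices: the internal vertex `v` contributes `(ν (L v), ν (R v), color v)`, the
vertices being listed with non-increasing valencies (descendants first among equal
valencies). -/
def BT.rmword : BT → List (ℕ × ℕ × Bool)
  | BT.leaf _ => []
  | BT.node c l r => mergeByNu l.rmword r.rmword ++ [(l.nu, r.nu, c)]

/-- The word of labels of the saturated chain `c(F)` associated to a forest `F`, read along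
the reverse-minimal linear extension of the internal vertices of `F`. -/
noncomputable def forestWord (F : Finset BT) : List (ℕ × ℕ × Bool) :=
  (F.toList.map BT.rmword).foldr mergeByNu []

/-- `TLyn_{n,p}^•`: pointed Lyndon trees on `[n]` whose associated chain ends at `[n]^p`,
i.e. whose tracked pointed element is `p`. -/
abbrev TLynBullet (n p : ℕ) : Type :=
  {T : BT // T.normalized ∧ T.pLyn ∧ T.leaves = Finset.Icc 1 n ∧ T.ppt = p}

/-- The labeling `λ̃` of `Πₙ•` proposed by Bellier-Millès, Delcroix-Oger and Hoffbeck: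
the cover `u`-merging blocks with minima `a < b` in a pointed partition `π` with `|π|`
blocks is labeled `(b, a + n - |π|)` if `u = 0` and `(b, b + n - |π|)` if `u = 1`. -/
noncomputable def labT (n : ℕ) {A : Finset ℕ} (π π' : PPart A) : ℕ × ℕ :=
  let olds := π.1 \ π'.1
  let mins := olds.image fun b => minB b.1
  let a := WithTop.untopD 0 mins.min
  let b := WithBot.unbotD 0 mins.max
  if ∃ c ∈ olds, minB c.1 = a ∧ ∃ d ∈ π'.1 \ π.1, d.2 = c.2
  then (b, b + n - π.1.card)
  else (b, a + n - π.1.card)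

/-- The (strict) lexicographic order on `ℕ × ℕ`. -/
def ltT (x y : ℕ × ℕ) : Prop := x.1 < y.1 ∨ (x.1 = y.1 ∧ x.2 < y.2)

section Bij

open Finset

variable {A : Finset ℕ} {P : Finset (Finset ℕ × ℕ)}

lemma minB_mem {B : Finset ℕ} (h : B.Nonempty) : minB B ∈ B := by
  obtain ⟨m, hm⟩ := Finset.min_of_nonempty h
  have hh : minB B = m := by show WithTop.untopD 0 B.min = m; rw [hm]; exact rfl
  rw [hh]; exact Finset.mem_of_min hm

lemma minB_le {B : Finset ℕ} {x : ℕ} (hx : x ∈ B) : minB B ≤ x := by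
  obtain ⟨m, hm⟩ := Finset.min_of_nonempty ⟨x, hx⟩
  have hh : minB B = m := by show WithTop.untopD 0 B.min = m; rw [hm]; exact rfl
  rw [hh]; exact Finset.min_le_of_eq hx hm

/-- Decorated partition properties. -/
def PProps (A : Finset ℕ) (P : Finset (Finset ℕ × ℕ)) : Prop :=
  (∀ b ∈ P, b.1.Nonempty) ∧ (∀ b ∈ P, ∀ b' ∈ P, b ≠ b' → Disjoint b.1 b'.1) ∧
    P.biUnion Prod.fst = A

lemma pprops_PP (π : PPart A) : PProps A π.1 :=
  ⟨fun b hb => ⟨b.2, π.2.1 b hb⟩, π.2.2.1, π.2.2.2⟩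

lemma pprops_WP (σ : WPart A) : PProps A σ.1 :=
  ⟨fun b hb => Finset.card_pos.1 (Nat.lt_of_le_of_lt (Nat.zero_le b.2) (σ.2.1 b hb)),
    σ.2.2.1, σ.2.2.2⟩

lemma fst_inj (hP : PProps A P) {c c' : Finset ℕ × ℕ} (hc : c ∈ P) (hc' : c' ∈ P)
    (he : c.1 = c'.1) : c = c' := by
  by_contra hne
  have hd := hP.2.1 c hc c' hc' hne
  obtain ⟨y, hy⟩ := hP.1 c hc
  exact Finset.disjoint_left.1 hd hy (he ▸ hy)

lemma minB_inj (hP : PProps A P) {c c' : Finset ℕ × ℕ} (hc : c ∈ P) (hc' : c' ∈ P)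
    (he : minB c.1 = minB c'.1) : c = c' := by
  by_contra hne
  have hd := hP.2.1 c hc c' hc' hne
  have h1 := minB_mem (hP.1 c hc)
  have h2 := minB_mem (hP.1 c' hc')
  rw [he] at h1
  exact Finset.disjoint_left.1 hd h1 h2

lemma merged_not_mem (hP : PProps A P) {b1 b2 : Finset ℕ × ℕ} (hb1 : b1 ∈ P) (hb2 : b2 ∈ P)
    (hne : b1 ≠ b2) (x : ℕ) : (b1.1 ∪ b2.1, x) ∉ P := by
  intro hm
  have hd12 := hP.2.1 b1 hb1 b2 hb2 hne
  obtain ⟨y1, hy1⟩ := hP.1 b1 hb1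
  obtain ⟨y2, hy2⟩ := hP.1 b2 hb2
  by_cases hmb : (b1.1 ∪ b2.1, x) = b1
  · have h1 : b1.1 ∪ b2.1 = b1.1 := congrArg Prod.fst hmb
    exact Finset.disjoint_left.1 hd12 (h1 ▸ Finset.mem_union_right _ hy2) hy2
  · have hd := hP.2.1 _ hm b1 hb1 hmb
    exact Finset.disjoint_left.1 hd (Finset.mem_union_left _ hy1) hy1

lemma diff_eq_pair {α : Type*} [DecidableEq α] {P : Finset α} {b1 b2 m : α}
    (hb1 : b1 ∈ P) (hb2 : b2 ∈ P) (hne : b1 ≠ b2) (hm : m ∉ P) :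
    P \ insert m ((P.erase b1).erase b2) = {b1, b2} := by
  ext x
  simp only [Finset.mem_sdiff, Finset.mem_insert, Finset.mem_erase, Finset.mem_singleton]
  constructor
  · rintro ⟨hx, hn⟩
    by_contra hc
    push_neg at hc
    exact hn (Or.inr ⟨hc.2, hc.1, hx⟩)
  · rintro (rfl | rfl)
    · exact ⟨hb1, by rintro (rfl | ⟨-, h, -⟩); exacts [hm hb1, h rfl]⟩
    · exact ⟨hb2, by rintro (rfl | ⟨h, -, -⟩); exacts [hm hb2, h rfl]⟩

lemma new_eq_singleton {α : Type*} [DecidableEq α] {P : Finset α} {b1 b2 m : α}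
    (hb1 : b1 ∈ P) (hb2 : b2 ∈ P) (hm : m ∉ P) :
    insert m ((P.erase b1).erase b2) \ P = {m} := by
  ext x
  simp only [Finset.mem_sdiff, Finset.mem_insert, Finset.mem_erase, Finset.mem_singleton]
  constructor
  · rintro ⟨(rfl | ⟨-, -, hx⟩), hn⟩
    · rfl
    · exact absurd hx hn
  · rintro rfl
    exact ⟨Or.inl rfl, hm⟩

lemma sdiff_pair_eq_erase {α : Type*} [DecidableEq α] (P : Finset α) (b1 b2 : α) :
    P \ {b1, b2} = (P.erase b1).erase b2 := by
  ext x
  simp only [Finset.mem_sdiff, Finset.mem_insert, Finset.mem_erase, Finset.mem_singleton]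
  tauto

lemma image_fst_erase (hP : PProps A P) {b : Finset ℕ × ℕ} (hb : b ∈ P) :
    (P.erase b).image Prod.fst = (P.image Prod.fst).erase b.1 := by
  ext x
  simp only [Finset.mem_image, Finset.mem_erase]
  constructor
  · rintro ⟨c, ⟨hcb, hc⟩, rfl⟩
    exact ⟨fun h => hcb (fst_inj hP hc hb h), c, hc, rfl⟩
  · rintro ⟨hx, c, hc, rfl⟩
    exact ⟨c, ⟨fun h => hx (by rw [h]), hc⟩, rfl⟩

lemma pair_min_max {a b : ℕ} (h : a < b) :
    (WithTop.untopD 0 ({a, b} : Finset ℕ).min = a) ∧ (WithBot.unbotD 0 ({a, b} : Finset ℕ).max = b) := by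
  constructor
  · have : ({a, b} : Finset ℕ).min = (a : WithTop ℕ) := by
      rw [Finset.min_insert, Finset.min_singleton]
      exact min_eq_left (by exact_mod_cast h.le)
    rw [this]; rfl
  · have : ({a, b} : Finset ℕ).max = (b : WithBot ℕ) := by
      rw [Finset.max_insert, Finset.max_singleton]
      exact max_eq_right (by exact_mod_cast h.le)
    rw [this]; rfl

end Bij
section Bij2
open Finset
variable {A : Finset ℕ}

lemma cover_shape {P P' : Finset (Finset ℕ × ℕ)} (hP : PProps A P)
    {b1 b2 : Finset ℕ × ℕ} {x : ℕ} (hb1 : b1 ∈ P) (hb2 : b2 ∈ P)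
    (hlt : minB b1.1 < minB b2.1)
    (hE : P' = insert (b1.1 ∪ b2.1, x) ((P.erase b1).erase b2)) :
    b1 ≠ b2 ∧ P \ P' = {b1, b2} ∧ P' \ P = {(b1.1 ∪ b2.1, x)} ∧
      WithTop.untopD 0 ((P \ P').image fun b => minB b.1).min = minB b1.1 ∧
      WithBot.unbotD 0 ((P \ P').image fun b => minB b.1).max = minB b2.1 := by
  have hne : b1 ≠ b2 := fun h => absurd hlt (by rw [h]; exact lt_irrefl _)
  have hm := merged_not_mem hP hb1 hb2 hne x
  subst hE
  have hd := diff_eq_pair hb1 hb2 hne hm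
  have hn := new_eq_singleton hb1 hb2 hm
  have himg : (({b1, b2} : Finset (Finset ℕ × ℕ)).image fun b => minB b.1)
      = {minB b1.1, minB b2.1} := by
    rw [Finset.image_insert, Finset.image_singleton]
  refine ⟨hne, hd, hn, ?_, ?_⟩
  · rw [hd, himg]; exact (pair_min_max hlt).1
  · rw [hd, himg]; exact (pair_min_max hlt).2

lemma labPP_eq (π π' : PPart A) {b1 b2 : Finset ℕ × ℕ} {p : ℕ}
    (hb1 : b1 ∈ π.1) (hb2 : b2 ∈ π.1) (hlt : minB b1.1 < minB b2.1)
    (hE : π'.1 = insert (b1.1 ∪ b2.1, p) ((π.1.erase b1).erase b2)) :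
    labPP π π' = (minB b1.1, minB b2.1, if p = b1.2 then true else false) := by
  obtain ⟨hne, hd, hn, hmin, hmax⟩ := cover_shape (pprops_PP π) hb1 hb2 hlt hE
  simp only [labPP]
  refine Prod.ext hmin (Prod.ext hmax ?_)
  rw [hmin, hd, hn]
  by_cases hpb : p = b1.2
  · rw [if_pos, if_pos hpb]
    exact ⟨b1, Finset.mem_insert_self _ _, rfl,
      (b1.1 ∪ b2.1, p), Finset.mem_singleton_self _, hpb⟩
  · rw [if_neg, if_neg hpb]
    rintro ⟨c, hc, hminc, d, hd', hdc⟩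
    rw [Finset.mem_singleton] at hd'
    subst hd'
    rcases Finset.mem_insert.1 hc with rfl | hc
    · exact hpb hdc
    · rw [Finset.mem_singleton] at hc
      subst hc
      exact hlt.ne' hminc

lemma labWP_eq (σ σ' : WPart A) {c1 c2 : Finset ℕ × ℕ} {u : Bool}
    (hc1 : c1 ∈ σ.1) (hc2 : c2 ∈ σ.1) (hlt : minB c1.1 < minB c2.1)
    (hE : σ'.1 = insert (c1.1 ∪ c2.1, c1.2 + c2.2 + if u then 1 else 0)
      ((σ.1.erase c1).erase c2)) :
    labWP σ σ' = (minB c1.1, minB c2.1, u) := by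
  obtain ⟨hne, hd, hn, hmin, hmax⟩ := cover_shape (pprops_WP σ) hc1 hc2 hlt hE
  have hsum : (σ.1 \ σ'.1).sum Prod.snd = c1.2 + c2.2 := by
    rw [hd]; exact Finset.sum_pair hne
  have hsum' : (σ'.1 \ σ.1).sum Prod.snd = c1.2 + c2.2 + if u then 1 else 0 := by
    rw [hn]; simp
  cases u <;> simp [labWP, hmin, hmax, hsum, hsum']

end Bij2
section Bij3
open Finset
variable {A : Finset ℕ}

/-- The invariant: the pointed and weighted partitions have the same underlying blocks. -/
def PWRel {A : Finset ℕ} (π : PPart A) (σ : WPart A) : Prop :=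
  π.1.image Prod.fst = σ.1.image Prod.fst

noncomputable def stepW {A : Finset ℕ} (σ : WPart A) (π π' : PPart A) : WPart A :=
  let olds := π.1 \ π'.1
  let R := σ.1.filter fun c => c.1 ∈ olds.image Prod.fst
  let F := insert ((π'.1 \ π.1).biUnion Prod.fst,
      R.sum Prod.snd + if (labPP π π').2.2 then 1 else 0) (σ.1 \ R)
  if h : (∀ b ∈ F, b.2 < b.1.card) ∧ (∀ b ∈ F, ∀ b' ∈ F, b ≠ b' → Disjoint b.1 b'.1) ∧
      F.biUnion Prod.fst = A
  then ⟨F, h⟩ else σ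

noncomputable def stepP {A : Finset ℕ} (π : PPart A) (σ σ' : WPart A) : PPart A :=
  let olds := σ.1 \ σ'.1
  let v := if (labWP σ σ').2.2 then (labWP σ σ').1 else (labWP σ σ').2.1
  let p := WithTop.untopD 0 ((π.1.filter fun c => minB c.1 = v).image Prod.snd).min
  let R := π.1.filter fun b => b.1 ∈ olds.image Prod.fst
  let F := insert ((σ'.1 \ σ.1).biUnion Prod.fst, p) (π.1 \ R)
  if h : (∀ b ∈ F, b.2 ∈ b.1) ∧ (∀ b ∈ F, ∀ b' ∈ F, b ≠ b' → Disjoint b.1 b'.1) ∧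
      F.biUnion Prod.fst = A
  then ⟨F, h⟩ else π

lemma pprops_merge {P : Finset (Finset ℕ × ℕ)} (hP : PProps A P)
    {c1 c2 : Finset ℕ × ℕ} (hc1 : c1 ∈ P) (hc2 : c2 ∈ P) (hne : c1 ≠ c2) (w : ℕ) :
    PProps A (insert (c1.1 ∪ c2.1, w) ((P.erase c1).erase c2)) := by
  have hsub : (P.erase c1).erase c2 ⊆ P :=
    (Finset.erase_subset _ _).trans (Finset.erase_subset _ _)
  have hdecomp : P = insert c1 (insert c2 ((P.erase c1).erase c2)) := by
    rw [Finset.insert_erase (Finset.mem_erase.2 ⟨fun h => hne h.symm, hc2⟩),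
      Finset.insert_erase hc1]
  refine ⟨?_, ?_, ?_⟩
  · intro b hb
    rcases Finset.mem_insert.1 hb with rfl | hb
    · obtain ⟨y, hy⟩ := hP.1 c1 hc1
      exact ⟨y, Finset.mem_union_left _ hy⟩
    · exact hP.1 b (hsub hb)
  · intro b hb b' hb' hbb'
    rcases Finset.mem_insert.1 hb with rfl | hb <;>
      rcases Finset.mem_insert.1 hb' with rfl | hb'
    · exact absurd rfl hbb'
    · have h1 : b' ≠ c1 := (Finset.mem_erase.1 (Finset.mem_erase.1 hb').2).1
      have h2 : b' ≠ c2 := (Finset.mem_erase.1 hb').1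
      exact Finset.disjoint_union_left.2
        ⟨(hP.2.1 b' (hsub hb') c1 hc1 h1).symm, (hP.2.1 b' (hsub hb') c2 hc2 h2).symm⟩
    · have h1 : b ≠ c1 := (Finset.mem_erase.1 (Finset.mem_erase.1 hb).2).1
      have h2 : b ≠ c2 := (Finset.mem_erase.1 hb).1
      exact Finset.disjoint_union_right.2
        ⟨hP.2.1 b (hsub hb) c1 hc1 h1, hP.2.1 b (hsub hb) c2 hc2 h2⟩
    · exact hP.2.1 b (hsub hb) b' (hsub hb') hbb'
  · have key : (insert (c1.1 ∪ c2.1, w) ((P.erase c1).erase c2)).biUnion Prod.fst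
        = P.biUnion Prod.fst := by
      conv_rhs => rw [hdecomp]
      simp [Finset.biUnion_insert, Finset.union_assoc]
    rw [key, hP.2.2]

lemma filter_mem_pair {Q : Finset (Finset ℕ × ℕ)} (hQ : PProps A Q)
    {c1 c2 : Finset ℕ × ℕ} (hc1 : c1 ∈ Q) (hc2 : c2 ∈ Q) :
    (Q.filter fun c => c.1 ∈ ({c1.1, c2.1} : Finset (Finset ℕ))) = {c1, c2} := by
  ext c
  simp only [Finset.mem_filter, Finset.mem_insert, Finset.mem_singleton]
  constructor
  · rintro ⟨hc, h | h⟩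
    · exact Or.inl (fst_inj hQ hc hc1 h)
    · exact Or.inr (fst_inj hQ hc hc2 h)
  · rintro (rfl | rfl)
    exacts [⟨hc1, Or.inl rfl⟩, ⟨hc2, Or.inr rfl⟩]

lemma pwrel_bot : PWRel (botPP A) (botWP A) := by
  simp only [PWRel, botPP, botWP, Finset.image_image]
  rfl

end Bij3
section Bij4
open Finset
variable {A : Finset ℕ}

lemma filter_minB_eq {P : Finset (Finset ℕ × ℕ)} (hP : PProps A P)
    {b : Finset ℕ × ℕ} (hb : b ∈ P) :
    (P.filter fun c => minB c.1 = minB b.1) = {b} := by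
  ext c
  simp only [Finset.mem_filter, Finset.mem_singleton]
  constructor
  · rintro ⟨hc, h⟩; exact minB_inj hP hc hb h
  · rintro rfl; exact ⟨hb, rfl⟩

lemma stepW_eq {π π' : PPart A} {σ : WPart A}
    {b1 b2 : Finset ℕ × ℕ} {p : ℕ}
    (hb1 : b1 ∈ π.1) (hb2 : b2 ∈ π.1) (hlt : minB b1.1 < minB b2.1)
    (hE : π'.1 = insert (b1.1 ∪ b2.1, p) ((π.1.erase b1).erase b2))
    {c1 c2 : Finset ℕ × ℕ} (hc1 : c1 ∈ σ.1) (hc2 : c2 ∈ σ.1)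
    (hf1 : c1.1 = b1.1) (hf2 : c2.1 = b2.1) :
    (stepW σ π π').1 = insert (b1.1 ∪ b2.1, c1.2 + c2.2 + if p = b1.2 then 1 else 0)
      ((σ.1.erase c1).erase c2) := by
  have hσP := pprops_WP σ
  have hπP := pprops_PP π
  obtain ⟨hne, hd, hn, hmin, hmax⟩ := cover_shape hπP hb1 hb2 hlt hE
  have hlab := labPP_eq π π' hb1 hb2 hlt hE
  have hcne : c1 ≠ c2 := by
    intro h
    rw [h, hf2] at hf1
    exact hlt.ne' (by rw [hf1])
  have hpairimg : ({b1, b2} : Finset (Finset ℕ × ℕ)).image Prod.fst = {c1.1, c2.1} := by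
    rw [Finset.image_insert, Finset.image_singleton, hf1, hf2]
  have hR : (σ.1.filter fun c => c.1 ∈ (π.1 \ π'.1).image Prod.fst) = {c1, c2} := by
    rw [hd, hpairimg]; exact filter_mem_pair hσP hc1 hc2
  have hBU : (π'.1 \ π.1).biUnion Prod.fst = b1.1 ∪ b2.1 := by
    rw [hn]; simp
  have hval : (if (labPP π π').2.2 then 1 else 0) = if p = b1.2 then 1 else 0 := by
    rw [hlab]; by_cases h : p = b1.2 <;> simp [h]
  have hF : insert ((π'.1 \ π.1).biUnion Prod.fst,
      (σ.1.filter fun c => c.1 ∈ (π.1 \ π'.1).image Prod.fst).sum Prod.snd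
        + if (labPP π π').2.2 then 1 else 0)
      (σ.1 \ (σ.1.filter fun c => c.1 ∈ (π.1 \ π'.1).image Prod.fst))
      = insert (b1.1 ∪ b2.1, c1.2 + c2.2 + if p = b1.2 then 1 else 0)
        ((σ.1.erase c1).erase c2) := by
    rw [hR, hBU, hval, sdiff_pair_eq_erase, Finset.sum_pair hcne]
  have hdisj12 : Disjoint b1.1 b2.1 := hπP.2.1 b1 hb1 b2 hb2 hne
  have hmerge := pprops_merge hσP hc1 hc2 hcne
    (c1.2 + c2.2 + if p = b1.2 then 1 else 0)
  rw [hf1, hf2] at hmerge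
  have hw : ∀ b ∈ insert (b1.1 ∪ b2.1, c1.2 + c2.2 + if p = b1.2 then 1 else 0)
      ((σ.1.erase c1).erase c2), b.2 < b.1.card := by
    intro b hb
    rcases Finset.mem_insert.1 hb with rfl | hb
    · have h1 : c1.2 < b1.1.card := hf1 ▸ σ.2.1 c1 hc1
      have h2 : c2.2 < b2.1.card := hf2 ▸ σ.2.1 c2 hc2
      have hcard : (b1.1 ∪ b2.1).card = b1.1.card + b2.1.card :=
        Finset.card_union_of_disjoint hdisj12
      simp only [hcard]
      by_cases h : p = b1.2 <;> simp [h] <;> omega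
    · exact σ.2.1 b ((Finset.erase_subset _ _).trans (Finset.erase_subset _ _) hb)
  simp only [stepW]
  rw [hF, dif_pos ⟨hw, hmerge.2.1, hmerge.2.2⟩]

lemma stepP_eq {σ σ' : WPart A} {π : PPart A}
    {c1 c2 : Finset ℕ × ℕ} {u : Bool}
    (hc1 : c1 ∈ σ.1) (hc2 : c2 ∈ σ.1) (hlt : minB c1.1 < minB c2.1)
    (hE : σ'.1 = insert (c1.1 ∪ c2.1, c1.2 + c2.2 + if u then 1 else 0)
      ((σ.1.erase c1).erase c2))
    {b1 b2 : Finset ℕ × ℕ} (hb1 : b1 ∈ π.1) (hb2 : b2 ∈ π.1)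
    (hf1 : b1.1 = c1.1) (hf2 : b2.1 = c2.1) :
    (stepP π σ σ').1 = insert (c1.1 ∪ c2.1, if u then b1.2 else b2.2)
      ((π.1.erase b1).erase b2) := by
  have hσP := pprops_WP σ
  have hπP := pprops_PP π
  obtain ⟨hne, hd, hn, hmin, hmax⟩ := cover_shape hσP hc1 hc2 hlt hE
  have hlab := labWP_eq σ σ' hc1 hc2 hlt hE
  have hbne : b1 ≠ b2 := by
    intro h
    rw [h, hf2] at hf1
    exact hlt.ne' (by rw [← hf1])
  have hpairimg : ({c1, c2} : Finset (Finset ℕ × ℕ)).image Prod.fst = {b1.1, b2.1} := by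
    rw [Finset.image_insert, Finset.image_singleton, hf1, hf2]
  have hR : (π.1.filter fun b => b.1 ∈ (σ.1 \ σ'.1).image Prod.fst) = {b1, b2} := by
    rw [hd, hpairimg]; exact filter_mem_pair hπP hb1 hb2
  have hBU : (σ'.1 \ σ.1).biUnion Prod.fst = c1.1 ∪ c2.1 := by
    rw [hn]; simp
  have hv : (if (labWP σ σ').2.2 then (labWP σ σ').1 else (labWP σ σ').2.1)
      = if u then minB b1.1 else minB b2.1 := by
    rw [hlab, hf1, hf2]
  have hp : WithTop.untopD 0 ((π.1.filter fun c =>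
      minB c.1 = if (labWP σ σ').2.2 then (labWP σ σ').1 else (labWP σ σ').2.1).image
        Prod.snd).min = if u then b1.2 else b2.2 := by
    rw [hv]
    cases u
    · simp only [if_neg Bool.false_ne_true, Bool.false_eq_true, if_false]
      rw [filter_minB_eq hπP hb2, Finset.image_singleton, Finset.min_singleton]
      exact rfl
    · simp only [if_pos, if_true]
      rw [filter_minB_eq hπP hb1, Finset.image_singleton, Finset.min_singleton]
      exact rfl
  have hF : insert ((σ'.1 \ σ.1).biUnion Prod.fst,
      WithTop.untopD 0 ((π.1.filter fun c =>
        minB c.1 = if (labWP σ σ').2.2 then (labWP σ σ').1 else (labWP σ σ').2.1).image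
          Prod.snd).min)
      (π.1 \ (π.1.filter fun b => b.1 ∈ (σ.1 \ σ'.1).image Prod.fst))
      = insert (c1.1 ∪ c2.1, if u then b1.2 else b2.2) ((π.1.erase b1).erase b2) := by
    rw [hp, hR, hBU, sdiff_pair_eq_erase]
  have hmerge := pprops_merge hπP hb1 hb2 hbne (if u then b1.2 else b2.2)
  rw [hf1, hf2] at hmerge
  have hpt : ∀ b ∈ insert (c1.1 ∪ c2.1, if u then b1.2 else b2.2)
      ((π.1.erase b1).erase b2), b.2 ∈ b.1 := by
    intro b hb
    rcases Finset.mem_insert.1 hb with rfl | hb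
    · cases u
      · simp only [Bool.false_eq_true, if_false]
        exact Finset.mem_union_right _ (hf2 ▸ π.2.1 b2 hb2)
      · simp only [if_true]
        exact Finset.mem_union_left _ (hf1 ▸ π.2.1 b1 hb1)
    · exact π.2.1 b ((Finset.erase_subset _ _).trans (Finset.erase_subset _ _) hb)
  simp only [stepP]
  rw [hF, dif_pos ⟨hpt, hmerge.2.1, hmerge.2.2⟩]

end Bij4
section Bij5
open Finset
variable {A : Finset ℕ}

lemma image_fst_erase_erase {P : Finset (Finset ℕ × ℕ)} (hP : PProps A P)
    {b1 b2 : Finset ℕ × ℕ} (hb1 : b1 ∈ P) (hb2 : b2 ∈ P) :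
    ((P.erase b1).erase b2).image Prod.fst = ((P.image Prod.fst).erase b1.1).erase b2.1 := by
  ext x
  simp only [Finset.mem_image, Finset.mem_erase]
  constructor
  · rintro ⟨c, ⟨hcb2, hcb1, hc⟩, rfl⟩
    exact ⟨fun h => hcb2 (fst_inj hP hc hb2 h), fun h => hcb1 (fst_inj hP hc hb1 h),
      c, hc, rfl⟩
  · rintro ⟨h2, h1, c, hc, rfl⟩
    exact ⟨c, ⟨fun h => h2 (by rw [h]), fun h => h1 (by rw [h]), hc⟩, rfl⟩

lemma pt_ne {π : PPart A} {b1 b2 : Finset ℕ × ℕ} (hb1 : b1 ∈ π.1) (hb2 : b2 ∈ π.1)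
    (hne : b1 ≠ b2) : b1.2 ≠ b2.2 := by
  intro h
  have hd := π.2.2.1 b1 hb1 b2 hb2 hne
  exact Finset.disjoint_left.1 hd (π.2.1 b1 hb1) (h ▸ π.2.1 b2 hb2)

lemma pwrel_pickW {π : PPart A} {σ : WPart A} (hrel : PWRel π σ)
    {b : Finset ℕ × ℕ} (hb : b ∈ π.1) : ∃ c ∈ σ.1, c.1 = b.1 := by
  have h : b.1 ∈ σ.1.image Prod.fst := hrel ▸ Finset.mem_image_of_mem _ hb
  obtain ⟨c, hc, he⟩ := Finset.mem_image.1 h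
  exact ⟨c, hc, he⟩

lemma pwrel_pickP {π : PPart A} {σ : WPart A} (hrel : PWRel π σ)
    {c : Finset ℕ × ℕ} (hc : c ∈ σ.1) : ∃ b ∈ π.1, b.1 = c.1 := by
  have h : c.1 ∈ π.1.image Prod.fst := by rw [hrel]; exact Finset.mem_image_of_mem _ hc
  obtain ⟨b, hb, he⟩ := Finset.mem_image.1 h
  exact ⟨b, hb, he⟩

lemma stepW_spec {π π' : PPart A} {σ : WPart A} (hrel : PWRel π σ) (hcov : covPP π π') :
    covWP σ (stepW σ π π') ∧ PWRel π' (stepW σ π π') ∧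
      labWP σ (stepW σ π π') = labPP π π' ∧ stepP π σ (stepW σ π π') = π' := by
  obtain ⟨b1, hb1, b2, hb2, hlt, p, hp, hE⟩ := hcov
  obtain ⟨c1, hc1, hf1⟩ := pwrel_pickW hrel hb1
  obtain ⟨c2, hc2, hf2⟩ := pwrel_pickW hrel hb2
  have hπP := pprops_PP π
  have hσP := pprops_WP σ
  obtain ⟨hne, hd, hn, hmin, hmax⟩ := cover_shape hπP hb1 hb2 hlt hE
  have he := stepW_eq hb1 hb2 hlt hE hc1 hc2 hf1 hf2
  set u : Bool := if p = b1.2 then true else false with hu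
  have hite : (if u then 1 else 0) = if p = b1.2 then 1 else 0 := by
    by_cases h : p = b1.2 <;> simp [hu, h]
  have hE' : (stepW σ π π').1 = insert (c1.1 ∪ c2.1, c1.2 + c2.2 + if u then 1 else 0)
      ((σ.1.erase c1).erase c2) := by
    rw [he, hf1, hf2, hite]
  have hltc : minB c1.1 < minB c2.1 := by rw [hf1, hf2]; exact hlt
  have hcovW : covWP σ (stepW σ π π') := ⟨c1, hc1, c2, hc2, hltc, u, hE'⟩
  refine ⟨hcovW, ?_, ?_, ?_⟩
  · -- PWRel π' (stepW σ π π')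
    show π'.1.image Prod.fst = (stepW σ π π').1.image Prod.fst
    rw [hE, hE', Finset.image_insert, Finset.image_insert,
      image_fst_erase_erase hπP hb1 hb2, image_fst_erase_erase hσP hc1 hc2,
      hrel, hf1, hf2]
  · rw [labWP_eq σ (stepW σ π π') hc1 hc2 hltc hE', labPP_eq π π' hb1 hb2 hlt hE,
      hf1, hf2]
  · -- roundtrip
    have hrt := stepP_eq hc1 hc2 hltc hE' hb1 hb2 hf1.symm hf2.symm
    apply Subtype.ext
    rw [hrt, hE, hf1, hf2]
    congr 1
    refine congrArg₂ Prod.mk rfl ?_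
    show (if u then b1.2 else b2.2) = p
    rcases hp with rfl | rfl
    · simp [hu]
    · have hne2 : b2.2 ≠ b1.2 := (pt_ne hb1 hb2 hne).symm
      simp [hu, hne2]

lemma stepP_spec {π : PPart A} {σ σ' : WPart A} (hrel : PWRel π σ) (hcov : covWP σ σ') :
    covPP π (stepP π σ σ') ∧ PWRel (stepP π σ σ') σ' ∧ stepW σ π (stepP π σ σ') = σ' := by
  obtain ⟨c1, hc1, c2, hc2, hlt, u, hE⟩ := hcov
  obtain ⟨b1, hb1, hf1⟩ := pwrel_pickP hrel hc1
  obtain ⟨b2, hb2, hf2⟩ := pwrel_pickP hrel hc2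
  have hπP := pprops_PP π
  have hσP := pprops_WP σ
  obtain ⟨hne, hd, hn, hmin, hmax⟩ := cover_shape hσP hc1 hc2 hlt hE
  have hbne : b1 ≠ b2 := by
    intro h
    rw [h, hf2] at hf1
    exact hlt.ne' (by rw [← hf1])
  have he := stepP_eq hc1 hc2 hlt hE hb1 hb2 hf1 hf2
  have hltb : minB b1.1 < minB b2.1 := by rw [hf1, hf2]; exact hlt
  have hE' : (stepP π σ σ').1 = insert (b1.1 ∪ b2.1, if u then b1.2 else b2.2)
      ((π.1.erase b1).erase b2) := by
    rw [he, hf1, hf2]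
  have hcovP : covPP π (stepP π σ σ') := by
    refine ⟨b1, hb1, b2, hb2, hltb, if u then b1.2 else b2.2, ?_, hE'⟩
    cases u
    · exact Or.inr (by simp)
    · exact Or.inl (by simp)
  refine ⟨hcovP, ?_, ?_⟩
  · show (stepP π σ σ').1.image Prod.fst = σ'.1.image Prod.fst
    rw [hE, hE', Finset.image_insert, Finset.image_insert,
      image_fst_erase_erase hπP hb1 hb2, image_fst_erase_erase hσP hc1 hc2,
      hrel, hf1, hf2]
  · have hrt := stepW_eq hb1 hb2 hltb hE' hc1 hc2 hf1.symm hf2.symm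
    apply Subtype.ext
    rw [hrt, hE, hf1, hf2]
    congr 1
    refine congrArg₂ Prod.mk rfl ?_
    show c1.2 + c2.2 + (if (if u then b1.2 else b2.2) = b1.2 then 1 else 0)
      = c1.2 + c2.2 + if u then 1 else 0
    congr 1
    cases u
    · have hne2 : b2.2 ≠ b1.2 := (pt_ne hb1 hb2 hbne).symm
      simp [hne2]
    · simp

end Bij5
section Bij6
open Finset

noncomputable def goW {A : Finset ℕ} (σ : WPart A) : List (PPart A) → List (WPart A)
  | [] => []
  | [_] => [σ]
  | π :: π' :: rest => σ :: goW (stepW σ π π') (π' :: rest)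

noncomputable def goP {A : Finset ℕ} (π : PPart A) : List (WPart A) → List (PPart A)
  | [] => []
  | [_] => [π]
  | σ :: σ' :: rest => π :: goP (stepP π σ σ') (σ' :: rest)

variable {A : Finset ℕ}

lemma goW_spec : ∀ (c : List (PPart A)) (π : PPart A) (σ : WPart A),
    c.head? = some π → c.Chain' covPP → PWRel π σ →
    (goW σ c).head? = some σ ∧ (goW σ c).Chain' covWP ∧
      wordOf labWP (goW σ c) = wordOf labPP c ∧ goP π (goW σ c) = c := by
  intro c
  induction c with
  | nil => intro π σ h; simp at h
  | cons π₀ rest ih =>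
    intro π σ hh hch hrel
    have hhead : π₀ = π := by simpa using hh
    subst hhead
    cases rest with
    | nil => simp [goW, goP, wordOf, List.isChain_singleton, List.Chain']
    | cons π' rest' =>
      obtain ⟨hcov, hch'⟩ := List.isChain_cons_cons.1 hch
      obtain ⟨hcovW, hrel', hlab, hrt⟩ := stepW_spec hrel hcov
      obtain ⟨hhd, hchW, hword, hgp⟩ := ih π' (stepW σ π₀ π') rfl hch' hrel'
      obtain ⟨l', hl'⟩ : ∃ l', goW (stepW σ π₀ π') (π' :: rest') = stepW σ π₀ π' :: l' := by
        cases hgw : goW (stepW σ π₀ π') (π' :: rest') with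
        | nil => rw [hgw] at hhd; simp at hhd
        | cons a l'' =>
          rw [hgw] at hhd
          simp only [List.head?_cons, Option.some.injEq] at hhd
          exact ⟨l'', by rw [hhd]⟩
      have hred : goW σ (π₀ :: π' :: rest') = σ :: goW (stepW σ π₀ π') (π' :: rest') := rfl
      refine ⟨by rw [hred]; rfl, ?_, ?_, ?_⟩
      · rw [hred, hl']
        exact List.isChain_cons_cons.2 ⟨hcovW, hl' ▸ hchW⟩
      · rw [hred, hl']
        show labWP σ (stepW σ π₀ π') :: wordOf labWP (stepW σ π₀ π' :: l')
          = labPP π₀ π' :: wordOf labPP (π' :: rest')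
        rw [hlab, ← hl', hword]
      · rw [hred, hl']
        show π₀ :: goP (stepP π₀ σ (stepW σ π₀ π')) (stepW σ π₀ π' :: l') = π₀ :: π' :: rest'
        rw [hrt, ← hl', hgp]

lemma goP_spec : ∀ (d : List (WPart A)) (σ : WPart A) (π : PPart A),
    d.head? = some σ → d.Chain' covWP → PWRel π σ →
    (goP π d).head? = some π ∧ (goP π d).Chain' covPP ∧ goW σ (goP π d) = d := by
  intro d
  induction d with
  | nil => intro σ π h; simp at h
  | cons σ₀ rest ih =>
    intro σ π hh hrel hch
    have hhead : σ₀ = σ := by simpa using hh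
    subst hhead
    cases rest with
    | nil => simp [goW, goP, List.isChain_singleton, List.Chain']
    | cons σ' rest' =>
      obtain ⟨hcov, hch'⟩ := List.isChain_cons_cons.1 hrel
      obtain ⟨hcovP, hrel', hrt⟩ := stepP_spec hch hcov
      obtain ⟨hhd, hchP, hgw⟩ := ih σ' (stepP π σ₀ σ') rfl hch' hrel'
      obtain ⟨l', hl'⟩ : ∃ l', goP (stepP π σ₀ σ') (σ' :: rest') = stepP π σ₀ σ' :: l' := by
        cases hgw2 : goP (stepP π σ₀ σ') (σ' :: rest') with
        | nil => rw [hgw2] at hhd; simp at hhd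
        | cons a l'' =>
          rw [hgw2] at hhd
          simp only [List.head?_cons, Option.some.injEq] at hhd
          exact ⟨l'', by rw [hhd]⟩
      have hred : goP π (σ₀ :: σ' :: rest') = π :: goP (stepP π σ₀ σ') (σ' :: rest') := rfl
      refine ⟨by rw [hred]; rfl, ?_, ?_⟩
      · rw [hred, hl']
        exact List.isChain_cons_cons.2 ⟨hcovP, hl' ▸ hchP⟩
      · rw [hred, hl']
        show σ₀ :: goW (stepW σ₀ π (stepP π σ₀ σ')) (stepP π σ₀ σ' :: l') = σ₀ :: σ' :: rest'
        rw [hrt, ← hl', hgw]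

end Bij6
/-- There is a label-preserving bijection between the saturated chains
starting at `0̂` of the pointed partition poset `Πₙ•` (labeled by `λ•`, equivalently
`λ•₂`) and the saturated chains starting at `0̂` of the weighted partition poset `Πₙʷ`
(labeled by `λ_w`): corresponding chains have identical words of labels. -/
theorem label_preserving_bijection_of_chains (n : ℕ) :
    ∃ e : {c : List (PPart (Finset.Icc 1 n)) //
            c.head? = some (botPP (Finset.Icc 1 n)) ∧ c.Chain' covPP} ≃
          {c : List (WPart (Finset.Icc 1 n)) //
            c.head? = some (botWP (Finset.Icc 1 n)) ∧ c.Chain' covWP},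
      ∀ c, wordOf labWP (e c).1 = wordOf labPP c.1 := by
  refine ⟨⟨fun c => ⟨goW (botWP (Finset.Icc 1 n)) c.1,
      (goW_spec c.1 (botPP _) (botWP _) c.2.1 c.2.2 pwrel_bot).1,
      (goW_spec c.1 (botPP _) (botWP _) c.2.1 c.2.2 pwrel_bot).2.1⟩,
    fun d => ⟨goP (botPP (Finset.Icc 1 n)) d.1,
      (goP_spec d.1 (botWP _) (botPP _) d.2.1 d.2.2 pwrel_bot).1,
      (goP_spec d.1 (botWP _) (botPP _) d.2.1 d.2.2 pwrel_bot).2.1⟩, ?_, ?_⟩, ?_⟩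
  · intro c
    apply Subtype.ext
    exact (goW_spec c.1 (botPP _) (botWP _) c.2.1 c.2.2 pwrel_bot).2.2.2
  · intro d
    apply Subtype.ext
    exact (goP_spec d.1 (botWP _) (botPP _) d.2.1 d.2.2 pwrel_bot).2.2
  · intro c
    exact (goW_spec c.1 (botPP _) (botWP _) c.2.1 c.2.2 pwrel_bot).2.2.1
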